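/- Assume (EA). If u ∈ T^n satisfies P(u) = 0, then u ∈ I_R; likewise, if 𝒫_qsym(u) = 0, then u ∈ I_R. Combined with 𝒫_qsym(I_R) = 0, the kernel of 𝒫_qsym restricted to T^n is exactly I_R ∩ T^n. -/

import Mathlib

/- Setting (common to all statements):
`V` is the complex vector space with basis `X_1, …, X_N`, `T = T(V)` the tensor algebra,
realized concretely as the algebra of the free monoid of words in the letters `Fin N`;
the homogeneous component `T^n` is the span of the words of length `n`.
For `j < i` we are given nonzero scalars `b i j` and elements `p i j` in the span of the
`X_k ⊗ X_l` with `k, l ≤ i - 1`; `I_R` is the two-sided ideal generated by the elements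
`X_i ⊗ X_j − b_{ij} X_j ⊗ X_i − p_{ij}`, and `𝒜 = T/I_R`. -/

open scoped BigOperators

noncomputable section

namespace QDiff

/-- Words in the letters `X_1, …, X_N` (indexed by `Fin N`). -/
abbrev Word (N : ℕ) := FreeMonoid (Fin N)

/-- The tensor algebra `T(V)` over the `N`-dimensional space `V` with basis `X_1,…,X_N`,
realized concretely as the monoid algebra on words. -/
abbrev T (N : ℕ) := MonoidAlgebra ℂ (Word N)

variable {N : ℕ}

/-- The basis vector `X_i` of `V ⊆ T(V)`. -/
def X (i : Fin N) : T N := MonoidAlgebra.single (FreeMonoid.of i) 1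

/-- The monomial of `T(V)` associated to a word. -/
def mono (w : Word N) : T N := MonoidAlgebra.single w 1

/-- Length (tensor degree) of a word. -/
def wlen (w : Word N) : ℕ := (FreeMonoid.toList w).length

/-- `cnt w k`: the number of occurrences of the letter `X_k` in the word `w`;
so `fun k => cnt w k` is `ℓ(w)`. -/
def cnt (w : Word N) (k : Fin N) : ℕ := (FreeMonoid.toList w).count k

/-- `w' <_l w`: at the smallest index at which `ℓ(w')` and `ℓ(w)` differ,
the entry of `ℓ(w')` is strictly greater than that of `ℓ(w)`. -/
def lexLt (w' w : Word N) : Prop :=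
  ∃ k : Fin N, (∀ j : Fin N, j < k → cnt w' j = cnt w j) ∧ cnt w k < cnt w' k

/-- `w' ≤_l w`. -/
def lexLe (w' w : Word N) : Prop := (∀ k : Fin N, cnt w' k = cnt w k) ∨ lexLt w' w

/-- The homogeneous component `T^n` of the tensor algebra. -/
def Tdeg (N n : ℕ) : Submodule ℂ (T N) :=
  Submodule.span ℂ {x : T N | ∃ w : Word N, wlen w = n ∧ x = mono w}

variable (b : Fin N → Fin N → ℂ) (p : Fin N → Fin N → T N)

/-- The scalars `b i j` (for `j < i`) are nonzero. -/
def GoodB : Prop := ∀ i j : Fin N, j < i → b i j ≠ 0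

/-- Each `p i j` (for `j < i`) lies in the span of the monomials `X_k ⊗ X_l`
with `k, l ≤ i - 1`. -/
def GoodP : Prop := ∀ i j : Fin N, j < i →
  p i j ∈ Submodule.span ℂ {x : T N | ∃ k l : Fin N, k < i ∧ l < i ∧ x = X k * X l}

/-- The generator `X_i ⊗ X_j − b_{ij} X_j ⊗ X_i − p_{ij}` of the ideal of relations. -/
def relGen (i j : Fin N) : T N := X i * X j - b i j • (X j * X i) - p i j

/-- The two-sided ideal `I_R` of relations (as a `ℂ`-submodule it is the span of the
elements `a ⬝ relGen i j ⬝ c`). -/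
def IR : Submodule ℂ (T N) :=
  Submodule.span ℂ
    {x : T N | ∃ (i j : Fin N) (a c : T N), j < i ∧ x = a * relGen b p i j * c}

/-- Condition (EA): every `u ∈ I_R` lies in the span of the elements
`a ⊗ (X_i ⊗ X_j − b_{ij} X_j ⊗ X_i − p_{ij}) ⊗ c`, where `j < i` and `a, c` are monomials
of `T` such that the monomial `a ⊗ X_i ⊗ X_j ⊗ c` is `≤_l` every monomial occurring in `u`. -/
def EA : Prop :=
  ∀ u ∈ IR b p, u ∈ Submodule.span ℂ
    {x : T N | ∃ (i j : Fin N) (a c : Word N), j < i ∧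
      x = mono a * relGen b p i j * mono c ∧
      ∀ w ∈ (MonoidAlgebra.coeff u : Word N →₀ ℂ).support,
        lexLe (a * (FreeMonoid.of i * FreeMonoid.of j) * c) w}

/-- The map `S : V ⊗ V → V ⊗ V` on pairs of basis vectors. -/
def Sact (x y : Fin N) : T N :=
  if y < x then b x y • (X y * X x) + p x y
  else if x < y then (b y x)⁻¹ • (X y * X x - p y x)
  else X x * X y

/-- The map `S̄ : V ⊗ V → V ⊗ V` on pairs of basis vectors. -/
def SbarAct (x y : Fin N) : T N :=
  if y < x then b x y • (X y * X x)
  else if x < y then (b y x)⁻¹ • (X y * X x)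
  else X x * X y

/-- Extend a function on words to a linear endomorphism of `T(V)`. -/
def liftWord (f : Word N → T N) : T N →ₗ[ℂ] T N :=
  (Finsupp.lsum ℂ (fun w => LinearMap.toSpanSingleton ℂ (T N) (f w))).comp
    (MonoidAlgebra.coeffLinearEquiv ℂ : T N ≃ₗ[ℂ] (Word N →₀ ℂ)).toLinearMap

/-- The action of the paper's `σ_{k+1}` (acting on the tensor factors in 0-indexed
positions `k, k+1`) on a word; identity on words that are too short. -/
def sigmaWord (k : ℕ) (w : Word N) : T N :=
  if h : k + 2 ≤ (FreeMonoid.toList w).length then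
    mono (FreeMonoid.ofList ((FreeMonoid.toList w).take k)) *
      Sact b p ((FreeMonoid.toList w).get ⟨k, by omega⟩)
        ((FreeMonoid.toList w).get ⟨k + 1, by omega⟩) *
      mono (FreeMonoid.ofList ((FreeMonoid.toList w).drop (k + 2)))
  else mono w

/-- The paper's operator `σ_{k+1}`: it acts as `S` on the tensor factors in 0-indexed
positions `k, k+1` and as the identity on all other factors. -/
def sigma (k : ℕ) : T N →ₗ[ℂ] T N := liftWord (sigmaWord b p k)

/-- The action of the paper's `σ̄_{k+1}` on a word. -/
def sigmabarWord (k : ℕ) (w : Word N) : T N :=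
  if h : k + 2 ≤ (FreeMonoid.toList w).length then
    mono (FreeMonoid.ofList ((FreeMonoid.toList w).take k)) *
      SbarAct b ((FreeMonoid.toList w).get ⟨k, by omega⟩)
        ((FreeMonoid.toList w).get ⟨k + 1, by omega⟩) *
      mono (FreeMonoid.ofList ((FreeMonoid.toList w).drop (k + 2)))
  else mono w

/-- The paper's operator `σ̄_{k+1}`: it acts as `S̄` on the tensor factors in 0-indexed
positions `k, k+1` and as the identity on all other factors. -/
def sigmabar (k : ℕ) : T N →ₗ[ℂ] T N := liftWord (sigmabarWord b k)

/-- The scalar by which `S̄` twists the (ordered) pair `(x, y)`. -/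
def betaC (x y : Fin N) : ℂ := if y < x then b x y else if x < y then (b y x)⁻¹ else 1

/-- The coefficient of the quasi-permutation action of `σ ∈ S_n` on the word
`X_{f 0} ⊗ ⋯ ⊗ X_{f (n-1)}`: the product of `β` over the inversions of `σ`. -/
def permCoeff {n : ℕ} (σ : Equiv.Perm (Fin n)) (f : Fin n → Fin N) : ℂ :=
  ∏ q ∈ Finset.univ.filter (fun q : Fin n × Fin n => q.1 < q.2 ∧ σ q.2 < σ q.1),
    betaC b (f q.1) (f q.2)

/-- The quasi-permutation action of `σ ∈ S_n` on a word
(identity on words of length `≠ n`). -/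
def permWordFun {n : ℕ} (σ : Equiv.Perm (Fin n)) (w : Word N) : T N :=
  if h : (FreeMonoid.toList w).length = n then
    permCoeff b σ (fun j => (FreeMonoid.toList w).get (Fin.cast h.symm j)) •
      mono (FreeMonoid.ofList
        (List.ofFn fun j => (FreeMonoid.toList w).get (Fin.cast h.symm (σ⁻¹ j))))
  else mono w

/-- The operator `σ̄` on `T^n` for an arbitrary permutation `σ ∈ S_n`
(the quasi-permutation representation). -/
def sigmabarPerm {n : ℕ} (σ : Equiv.Perm (Fin n)) : T N →ₗ[ℂ] T N :=
  liftWord (permWordFun b σ)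

/-- The quasi-symmetrization operator `P_quasisym = (1/n!) ∑_{σ ∈ S_n} σ̄` on `T^n`. -/
def Pquasisym (n : ℕ) : T N →ₗ[ℂ] T N :=
  (n.factorial : ℂ)⁻¹ • ∑ σ : Equiv.Perm (Fin n), sigmabarPerm b σ

/-- The adjacent transposition `s_{k+1} = (k, k+1)` (0-indexed) in `S_n`. -/
def swapAdj (n : ℕ) (k : {k : ℕ // k + 2 ≤ n}) : Equiv.Perm (Fin n) :=
  Equiv.swap ⟨k.1, by omega⟩ ⟨k.1 + 1, by omega⟩

/-- A choice, for each `σ ∈ S_n`, of a list of adjacent transpositions. -/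
def DecompChoice (n : ℕ) := Equiv.Perm (Fin n) → List {k : ℕ // k + 2 ≤ n}

/-- The chosen lists really are decompositions: `σ = s_{i_1} ⋯ s_{i_r}`. -/
def ValidDecomp {n : ℕ} (D : DecompChoice n) : Prop :=
  ∀ σ : Equiv.Perm (Fin n), ((D σ).map (swapAdj n)).prod = σ

/-- `σ̂ = σ_{i_1} ⋯ σ_{i_r}` for the chosen decomposition `σ = s_{i_1} ⋯ s_{i_r}`. -/
def Phat {n : ℕ} (D : DecompChoice n) (σ : Equiv.Perm (Fin n)) : Module.End ℂ (T N) :=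
  ((D σ).map (fun k => (sigma b p k.1 : Module.End ℂ (T N)))).prod

/-- `P = (1/n!) ∑_{σ ∈ S_n} σ̂` (depending on the chosen decompositions `D`). -/
def POp {n : ℕ} (D : DecompChoice n) : Module.End ℂ (T N) :=
  (n.factorial : ℂ)⁻¹ • ∑ σ : Equiv.Perm (Fin n), Phat b p D σ

/-- `Q` is the operator `𝒫_qsym = lim_{M → ∞} P^M`: on each `T^n` and for every choice
of decompositions, the sequence `P^M u` is eventually equal to `Q u`. -/
def IsPqsym (Q : T N →ₗ[ℂ] T N) : Prop :=
  ∀ (n : ℕ) (D : DecompChoice n), ValidDecomp D →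
    ∀ u ∈ Tdeg N n, ∃ N₀ : ℕ, ∀ M ≥ N₀, ((POp b p D) ^ M) u = Q u

/-- The operator `I_r ⊗ Q^k ⊗ I_s` on `T^{r+k+s}`: on a word, apply `Q` to the middle
`k` tensor factors and the identity to the outer factors. -/
def middleMap (Q : T N →ₗ[ℂ] T N) (r k : ℕ) : T N →ₗ[ℂ] T N :=
  liftWord (fun w =>
    mono (FreeMonoid.ofList ((FreeMonoid.toList w).take r)) *
      Q (mono (FreeMonoid.ofList (((FreeMonoid.toList w).drop r).take k))) *
      mono (FreeMonoid.ofList ((FreeMonoid.toList w).drop (r + k))))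

/-- The pairing between `T(V^*)` (realized via the dual basis, hence again as the span
of words) and `T(V)`: a dual-basis word pairs to `1` with the corresponding word of the
same degree, and to `0` with all other words. -/
def pairT (w z : T N) : ℂ :=
  Finsupp.sum (MonoidAlgebra.coeff w : Word N →₀ ℂ) (fun a c => c * (MonoidAlgebra.coeff z : Word N →₀ ℂ) a)

/-- The quotient relation defining the quadratic algebra `𝒜 = T/I_R = RingQuot (Rel b p)`. -/
inductive Rel (b : Fin N → Fin N → ℂ) (p : Fin N → Fin N → T N) : T N → T N → Prop
  | mk (i j : Fin N) (h : j < i) : Rel b p (X i * X j) (b i j • (X j * X i) + p i j)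

/-- The ordered monomial `X_1^{a_1} ⊗ X_2^{a_2} ⊗ ⋯ ⊗ X_N^{a_N}`. -/
def ordMono (a : Fin N → ℕ) : T N := ((List.finRange N).map (fun i => X i ^ a i)).prod


/-! ### Auxiliary lemmas -/

section Aux

variable {N : ℕ} (b : Fin N → Fin N → ℂ) (p : Fin N → Fin N → T N)

lemma liftWord_single (f : Word N → T N) (w : Word N) (c : ℂ) :
    liftWord f (MonoidAlgebra.single w c) = c • f w := by
  rw [liftWord, LinearMap.comp_apply, LinearEquiv.coe_coe]
  change (Finsupp.lsum ℂ _) (Finsupp.single w c) = _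
  rw [Finsupp.lsum_single, LinearMap.toSpanSingleton_apply]

lemma sigma_single (k : ℕ) (w : Word N) (c : ℂ) :
    sigma b p k (MonoidAlgebra.single w c) = c • sigmaWord b p k w :=
  liftWord_single _ _ _

lemma sigma_mono (k : ℕ) (w : Word N) :
    sigma b p k (mono w) = sigmaWord b p k w := by
  rw [mono, sigma_single, one_smul]

lemma mono_mul (u v : Word N) : mono u * mono v = mono (N := N) (u * v) := by
  simp [mono, MonoidAlgebra.single_mul_single]

lemma X_mul (i j : Fin N) : X i * X j = mono (FreeMonoid.of i * FreeMonoid.of j) := by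
  simp [X, mono, MonoidAlgebra.single_mul_single]

lemma single_eq_smul_mono (w : Word N) (c : ℂ) :
    (MonoidAlgebra.single w c : T N) = c • mono w := by
  simp [mono, MonoidAlgebra.smul_single']

lemma mono_mem_Tdeg {w : Word N} {n : ℕ} (h : wlen w = n) : mono w ∈ Tdeg N n :=
  Submodule.subset_span ⟨w, h, rfl⟩

lemma Tdeg_mul {r s : ℕ} {u v : T N} (hu : u ∈ Tdeg N r) (hv : v ∈ Tdeg N s) :
    u * v ∈ Tdeg N (r + s) := by
  induction hu using Submodule.span_induction with
  | mem x hx =>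
    induction hv using Submodule.span_induction with
    | mem y hy =>
      obtain ⟨w1, hw1, rfl⟩ := hx
      obtain ⟨w2, hw2, rfl⟩ := hy
      rw [mono_mul]
      have e1 : (FreeMonoid.toList w1).length = r := hw1
      have e2 : (FreeMonoid.toList w2).length = s := hw2
      exact mono_mem_Tdeg (by simp [wlen, FreeMonoid.toList_mul, e1, e2])
    | zero => rw [mul_zero]; exact zero_mem _
    | add y z _ _ hy hz => rw [mul_add]; exact add_mem hy hz
    | smul c y _ hy => rw [mul_smul_comm]; exact Submodule.smul_mem _ _ hy
  | zero => rw [zero_mul]; exact zero_mem _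
  | add y z _ _ hy hz => rw [add_mul]; exact add_mem hy hz
  | smul c y _ hy => rw [smul_mul_assoc]; exact Submodule.smul_mem _ _ hy

lemma X_mem_Tdeg2 (i j : Fin N) : X i * X j ∈ Tdeg N 2 := by
  rw [X_mul]
  exact mono_mem_Tdeg (by simp [wlen, FreeMonoid.toList_mul, FreeMonoid.toList_of])

lemma p_mem_Tdeg2 (hp : GoodP p) {i j : Fin N} (h : j < i) : p i j ∈ Tdeg N 2 := by
  refine Submodule.span_le.mpr ?_ (hp i j h)
  rintro x ⟨k, l, -, -, rfl⟩
  exact X_mem_Tdeg2 k l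

lemma Sact_mem_Tdeg2 (hp : GoodP p) (x y : Fin N) : Sact b p x y ∈ Tdeg N 2 := by
  unfold Sact
  split_ifs with h1 h2
  · exact add_mem (Submodule.smul_mem _ _ (X_mem_Tdeg2 y x)) (p_mem_Tdeg2 p hp h1)
  · exact Submodule.smul_mem _ _ (sub_mem (X_mem_Tdeg2 y x) (p_mem_Tdeg2 p hp h2))
  · exact X_mem_Tdeg2 x y

lemma sigmaWord_mem (hp : GoodP p) (k : ℕ) {w : Word N} {n : ℕ} (h : wlen w = n) :
    sigmaWord b p k w ∈ Tdeg N n := by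
  unfold sigmaWord
  split_ifs with hk
  · have hn : (FreeMonoid.toList w).length = n := h
    have h1 : mono (N := N) (FreeMonoid.ofList ((FreeMonoid.toList w).take k)) ∈ Tdeg N k :=
      mono_mem_Tdeg (by simp [wlen, FreeMonoid.toList_ofList]; omega)
    have h2 : mono (N := N) (FreeMonoid.ofList ((FreeMonoid.toList w).drop (k + 2))) ∈
        Tdeg N (n - (k + 2)) :=
      mono_mem_Tdeg (by simp [wlen, FreeMonoid.toList_ofList]; omega)
    have := Tdeg_mul (Tdeg_mul h1 (Sact_mem_Tdeg2 b p hp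
      ((FreeMonoid.toList w).get ⟨k, by omega⟩)
      ((FreeMonoid.toList w).get ⟨k + 1, by omega⟩))) h2
    have harith : k + 2 + (n - (k + 2)) = n := by
      have : k + 2 ≤ n := by rw [← h]; exact hk
      omega
    rwa [harith] at this
  · exact mono_mem_Tdeg h

lemma sigma_mem (hp : GoodP p) (k : ℕ) {u : T N} {n : ℕ} (hu : u ∈ Tdeg N n) :
    sigma b p k u ∈ Tdeg N n := by
  induction hu using Submodule.span_induction with
  | mem x hx =>
    obtain ⟨w, hw, rfl⟩ := hx
    rw [sigma_mono]
    exact sigmaWord_mem b p hp k hw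
  | zero => rw [map_zero]; exact zero_mem _
  | add y z _ _ hy hz => rw [map_add]; exact add_mem hy hz
  | smul c y _ hy => rw [map_smul]; exact Submodule.smul_mem _ _ hy

/-- The splitting of a monomial at positions `k`, `k+1`. -/
lemma mono_eq_split (w : Word N) (k : ℕ) (h : k + 2 ≤ (FreeMonoid.toList w).length)
    (h1 : k < (FreeMonoid.toList w).length) (h2 : k + 1 < (FreeMonoid.toList w).length) :
    mono w = mono (FreeMonoid.ofList ((FreeMonoid.toList w).take k)) *
      (X ((FreeMonoid.toList w).get ⟨k, h1⟩) * X ((FreeMonoid.toList w).get ⟨k + 1, h2⟩)) *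
      mono (FreeMonoid.ofList ((FreeMonoid.toList w).drop (k + 2))) := by
  rw [X_mul, mono_mul, mono_mul]
  congr 1
  apply FreeMonoid.toList.injective
  simp only [FreeMonoid.toList_mul, FreeMonoid.toList_of, FreeMonoid.toList_ofList,
    List.get_eq_getElem]
  conv_lhs => rw [← List.take_append_drop k (FreeMonoid.toList w)]
  rw [List.drop_eq_getElem_cons h1, List.drop_eq_getElem_cons h2]
  simp

/-- The key pointwise computation: `a ⬝ (X_x X_y − S(X_x X_y)) ⬝ c ∈ I_R`. -/
lemma mul_sub_Sact_mem_IR (hb : GoodB b) (x y : Fin N) (A C : T N) :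
    A * (X x * X y - Sact b p x y) * C ∈ IR b p := by
  rcases lt_trichotomy y x with hyx | heq | hxy
  · have : X x * X y - Sact b p x y = relGen b p x y := by
      rw [Sact, if_pos hyx, relGen, sub_sub]
    rw [this]
    exact Submodule.subset_span ⟨x, y, A, C, hyx, rfl⟩
  · subst heq
    rw [Sact, if_neg (lt_irrefl y), if_neg (lt_irrefl y), sub_self, mul_zero, zero_mul]
    exact zero_mem _
  · have hbne : b y x ≠ 0 := hb y x hxy
    have : X x * X y - Sact b p x y = (-(b y x)⁻¹) • relGen b p y x := by
      rw [Sact, if_neg (asymm hxy), if_pos hxy, relGen]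
      match_scalars <;> field_simp
    rw [this, mul_smul_comm, smul_mul_assoc]
    exact Submodule.smul_mem _ _ (Submodule.subset_span ⟨y, x, A, C, hxy, rfl⟩)

lemma mono_sub_sigmaWord_mem (hb : GoodB b) (k : ℕ) (w : Word N) :
    mono w - sigmaWord b p k w ∈ IR b p := by
  unfold sigmaWord
  split_ifs with h
  · have h1 : k < (FreeMonoid.toList w).length := by omega
    have h2 : k + 1 < (FreeMonoid.toList w).length := by omega
    rw [mono_eq_split w k h h1 h2]
    rw [show ∀ A u v C : T N, A * u * C - A * v * C = A * (u - v) * C by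
      intro A u v C; rw [mul_sub, sub_mul]]
    exact mul_sub_Sact_mem_IR b p hb _ _ _ _
  · rw [sub_self]; exact zero_mem _

lemma sub_sigma_mem (hb : GoodB b) (k : ℕ) (v : T N) :
    v - sigma b p k v ∈ IR b p := by
  induction v using MonoidAlgebra.induction_on with
  | of w =>
    show mono w - sigma b p k (mono w) ∈ IR b p
    rw [sigma_mono]
    exact mono_sub_sigmaWord_mem b p hb k w
  | add f g hf hg =>
    rw [map_add]
    have h := add_mem hf hg
    rwa [sub_add_sub_comm] at h
  | smul r f hf =>
    rw [map_smul, ← smul_sub]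
    exact Submodule.smul_mem _ _ hf

lemma sub_prodList_mem (hb : GoodB b) {n : ℕ} (l : List {k : ℕ // k + 2 ≤ n}) (v : T N) :
    v - ((l.map (fun k => (sigma b p k.1 : Module.End ℂ (T N)))).prod) v ∈ IR b p := by
  induction l generalizing v with
  | nil => simp only [List.map_nil, List.prod_nil, Module.End.one_apply]
           rw [sub_self]; exact zero_mem _
  | cons a t ih =>
    rw [List.map_cons, List.prod_cons, Module.End.mul_apply]
    have h1 := sub_sigma_mem b p hb a.1
      (((t.map (fun k => (sigma b p k.1 : Module.End ℂ (T N)))).prod) v)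
    have h2 := ih v
    have := add_mem h2 h1
    rwa [sub_add_sub_cancel] at this
    
lemma sub_Phat_mem (hb : GoodB b) {n : ℕ} (D : DecompChoice n) (σ : Equiv.Perm (Fin n))
    (v : T N) : v - Phat b p D σ v ∈ IR b p :=
  sub_prodList_mem b p hb (D σ) v

lemma POp_apply {n : ℕ} (D : DecompChoice n) (v : T N) :
    POp b p D v = (n.factorial : ℂ)⁻¹ • ∑ σ : Equiv.Perm (Fin n), Phat b p D σ v := by
  rw [POp, LinearMap.smul_apply, LinearMap.sum_apply]

lemma sub_POp_mem (hb : GoodB b) {n : ℕ} (D : DecompChoice n) (v : T N) :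
    v - POp b p D v ∈ IR b p := by
  have hfac : ((n.factorial : ℂ))⁻¹ • ((n.factorial : ℂ) • v) = v := by
    rw [smul_smul, inv_mul_cancel₀ (Nat.cast_ne_zero.mpr n.factorial_ne_zero), one_smul]
  have hv : v - POp b p D v
      = (n.factorial : ℂ)⁻¹ • ∑ σ : Equiv.Perm (Fin n), (v - Phat b p D σ v) := by
    rw [Finset.sum_sub_distrib, Finset.sum_const, smul_sub, POp_apply]
    congr 1
    rw [Finset.card_univ, Fintype.card_perm, Fintype.card_fin, ← Nat.cast_smul_eq_nsmul ℂ, hfac]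
  rw [hv]
  exact Submodule.smul_mem _ _ (Submodule.sum_mem _ (fun σ _ => sub_Phat_mem b p hb D σ v))

lemma sub_POp_pow_mem (hb : GoodB b) {n : ℕ} (D : DecompChoice n) (M : ℕ) (v : T N) :
    v - (POp b p D ^ M) v ∈ IR b p := by
  induction M generalizing v with
  | zero => simp only [pow_zero, Module.End.one_apply]; rw [sub_self]; exact zero_mem _
  | succ M ih =>
    rw [pow_succ', Module.End.mul_apply]
    have := add_mem (ih v) (sub_POp_mem b p hb D ((POp b p D ^ M) v))
    rwa [sub_add_sub_cancel] at this

lemma Phat_mem (hp : GoodP p) {n : ℕ} (D : DecompChoice n) (σ : Equiv.Perm (Fin n))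
    {u : T N} {m : ℕ} (hu : u ∈ Tdeg N m) : Phat b p D σ u ∈ Tdeg N m := by
  unfold Phat
  generalize (D σ) = l
  induction l generalizing u with
  | nil => simpa using hu
  | cons a t ih =>
    rw [List.map_cons, List.prod_cons, Module.End.mul_apply]
    exact sigma_mem b p hp a.1 (ih hu)

lemma POp_mem (hp : GoodP p) {n : ℕ} (D : DecompChoice n) {u : T N} {m : ℕ}
    (hu : u ∈ Tdeg N m) : POp b p D u ∈ Tdeg N m := by
  rw [POp_apply]
  exact Submodule.smul_mem _ _
    (Submodule.sum_mem _ (fun σ _ => Phat_mem b p hp D σ hu))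

/-- Existence of a valid choice of decompositions. -/
lemma exists_validDecomp (n : ℕ) : ∃ D : DecompChoice n, ValidDecomp D := by
  suffices h : ∀ σ : Equiv.Perm (Fin n),
      ∃ l : List {k : ℕ // k + 2 ≤ n}, (l.map (swapAdj n)).prod = σ by
    choose D hD using h
    exact ⟨D, hD⟩
  intro σ
  match n with
  | 0 => exact ⟨[], Subsingleton.elim _ _⟩
  | (m + 1) =>
    have hσ : σ ∈ Submonoid.closure
        (Set.range fun i : Fin m ↦ Equiv.swap i.castSucc i.succ) := by
      rw [Equiv.Perm.mclosure_swap_castSucc_succ]; trivial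
    obtain ⟨l, hl, hprod⟩ := Submonoid.exists_list_of_mem_closure hσ
    suffices h2 : ∀ l : List (Equiv.Perm (Fin (m + 1))),
        (∀ y ∈ l, y ∈ Set.range fun i : Fin m ↦ Equiv.swap i.castSucc i.succ) →
        ∃ l' : List {k : ℕ // k + 2 ≤ m + 1}, l'.map (swapAdj (m + 1)) = l by
      obtain ⟨l', hl'⟩ := h2 l hl
      exact ⟨l', by rw [hl', hprod]⟩
    intro l
    induction l with
    | nil => exact fun _ => ⟨[], rfl⟩
    | cons y t ih =>
      intro hmem
      obtain ⟨i, hi⟩ := hmem y List.mem_cons_self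
      obtain ⟨t', ht'⟩ := ih (fun z hz => hmem z (List.mem_cons_of_mem _ hz))
      refine ⟨⟨i.1, by omega⟩ :: t', ?_⟩
      have hy : swapAdj (m + 1) ⟨i.1, by omega⟩ = y := by
        rw [← hi]
        unfold swapAdj
        congr 1
      rw [List.map_cons, ht', hy]

/-- `Q ∘ P = Q` on `T^n`. -/
lemma Q_POp (hp : GoodP p) {Q : T N →ₗ[ℂ] T N} (hQ : IsPqsym b p Q) {n : ℕ}
    {D : DecompChoice n} (hD : ValidDecomp D) {u : T N} (hu : u ∈ Tdeg N n) :
    Q (POp b p D u) = Q u := by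
  obtain ⟨N₀, h₀⟩ := hQ n D hD u hu
  obtain ⟨N₁, h₁⟩ := hQ n D hD (POp b p D u) (POp_mem b p hp D hu)
  have e1 := h₁ (max N₀ N₁) (le_max_right _ _)
  have e2 := h₀ (max N₀ N₁ + 1) (by omega)
  rw [← e1, ← e2, pow_succ, Module.End.mul_apply]

lemma valid_append {n : ℕ} {D : DecompChoice n} (hD : ValidDecomp D) (k : ℕ)
    (hk : k + 2 ≤ n) :
    ValidDecomp (fun σ => D (σ * swapAdj n ⟨k, hk⟩) ++ [⟨k, hk⟩]) := by
  intro σ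
  rw [List.map_append, List.prod_append, hD (σ * swapAdj n ⟨k, hk⟩)]
  simp [swapAdj, mul_assoc, Equiv.swap_mul_self]

lemma POp_append {n : ℕ} (D : DecompChoice n) (k : ℕ) (hk : k + 2 ≤ n) :
    POp b p (fun σ => D (σ * swapAdj n ⟨k, hk⟩) ++ [⟨k, hk⟩])
      = POp b p D * (sigma b p k : Module.End ℂ (T N)) := by
  unfold POp
  rw [smul_mul_assoc]
  congr 1
  rw [Finset.sum_mul]
  refine Fintype.sum_equiv (Equiv.mulRight (swapAdj n ⟨k, hk⟩)) _ _ (fun σ => ?_)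
  simp only [Phat, List.map_append, List.prod_append, List.map_cons, List.map_nil,
    List.prod_cons, List.prod_nil, mul_one, Equiv.coe_mulRight]

/-- The key identity: `Q ∘ σ_k = Q` on `T^n`. -/
lemma Q_sigma (hp : GoodP p) {Q : T N →ₗ[ℂ] T N} (hQ : IsPqsym b p Q) {n k : ℕ}
    (hk : k + 2 ≤ n) {u : T N} (hu : u ∈ Tdeg N n) :
    Q (sigma b p k u) = Q u := by
  obtain ⟨D, hD⟩ := exists_validDecomp n
  have hD' := valid_append hD k hk
  have h1 : Q (POp b p (fun σ => D (σ * swapAdj n ⟨k, hk⟩) ++ [⟨k, hk⟩]) u) = Q u :=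
    Q_POp b p hp hQ hD' hu
  have h2 : Q (POp b p D (sigma b p k u)) = Q (sigma b p k u) :=
    Q_POp b p hp hQ hD (sigma_mem b p hp k hu)
  rw [← h2, ← h1, POp_append, Module.End.mul_apply]

lemma sigmaWord_concat (a c : Word N) (x y : Fin N) :
    sigmaWord b p (wlen a) (a * (FreeMonoid.of x * FreeMonoid.of y) * c)
      = mono a * Sact b p x y * mono c := by
  have hL : FreeMonoid.toList (a * (FreeMonoid.of x * FreeMonoid.of y) * c)
      = FreeMonoid.toList a ++ (x :: y :: FreeMonoid.toList c) := by
    simp [FreeMonoid.toList_mul, FreeMonoid.toList_of]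
  have hwlen : wlen a = (FreeMonoid.toList a).length := rfl
  have hlen : wlen a + 2 ≤ (FreeMonoid.toList (a * (FreeMonoid.of x * FreeMonoid.of y) * c)).length := by
    rw [hL, hwlen]
    simp only [List.length_append, List.length_cons]
    omega
  rw [sigmaWord, dif_pos hlen]
  have htake : (FreeMonoid.toList (a * (FreeMonoid.of x * FreeMonoid.of y) * c)).take (wlen a)
      = FreeMonoid.toList a := by
    rw [hL, hwlen, List.take_append_of_le_length le_rfl, List.take_length]
  have hdrop : (FreeMonoid.toList (a * (FreeMonoid.of x * FreeMonoid.of y) * c)).drop (wlen a + 2)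
      = FreeMonoid.toList c := by
    rw [hL, hwlen, List.drop_append]
    simp
  have hgx : (FreeMonoid.toList (a * (FreeMonoid.of x * FreeMonoid.of y) * c)).get
      ⟨wlen a, by omega⟩ = x := by
    simp only [List.get_eq_getElem, hL, hwlen]
    rw [List.getElem_append_right le_rfl]
    simp
  have hgy : (FreeMonoid.toList (a * (FreeMonoid.of x * FreeMonoid.of y) * c)).get
      ⟨wlen a + 1, by omega⟩ = y := by
    simp only [List.get_eq_getElem, hL, hwlen]
    rw [List.getElem_append_right (by omega)]
    simp
  rw [htake, hdrop, hgx, hgy, FreeMonoid.ofList_toList, FreeMonoid.ofList_toList]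

lemma rel_eq_sub {i j : Fin N} (hij : j < i) (a c : Word N) :
    mono a * relGen b p i j * mono c
      = mono (a * (FreeMonoid.of i * FreeMonoid.of j) * c)
        - sigma b p (wlen a) (mono (a * (FreeMonoid.of i * FreeMonoid.of j) * c)) := by
  rw [sigma_mono, sigmaWord_concat,
    show mono (a * (FreeMonoid.of i * FreeMonoid.of j) * c)
      = mono a * (X i * X j) * mono c by rw [X_mul, mono_mul, mono_mul],
    show ∀ A u v C : T N, A * u * C - A * v * C = A * (u - v) * C by
      intro A u v C; rw [mul_sub, sub_mul]]
  congr 1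
  rw [Sact, if_pos hij, relGen, sub_sub]

lemma Q_rel_mono (hp : GoodP p) {Q : T N →ₗ[ℂ] T N} (hQ : IsPqsym b p Q)
    {i j : Fin N} (hij : j < i) (a c : Word N) :
    Q (mono a * relGen b p i j * mono c) = 0 := by
  have hmem : mono (a * (FreeMonoid.of i * FreeMonoid.of j) * c)
      ∈ Tdeg N (wlen a + 2 + wlen c) :=
    mono_mem_Tdeg (by simp [wlen, FreeMonoid.toList_mul, FreeMonoid.toList_of]; ring)
  rw [rel_eq_sub b p hij a c, map_sub,
    Q_sigma b p hp hQ (by omega : wlen a + 2 ≤ wlen a + 2 + wlen c) hmem, sub_self]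

lemma Q_rel (hp : GoodP p) {Q : T N →ₗ[ℂ] T N} (hQ : IsPqsym b p Q)
    {i j : Fin N} (hij : j < i) (A C : T N) :
    Q (A * relGen b p i j * C) = 0 := by
  have key : ∀ (a : Word N) (C : T N), Q (mono a * relGen b p i j * C) = 0 := by
    intro a C
    induction C using MonoidAlgebra.induction_on with
    | of w =>
      show Q (mono a * relGen b p i j * mono w) = 0
      exact Q_rel_mono b p hp hQ hij a w
    | add f g hf hg => rw [mul_add, map_add, hf, hg, add_zero]
    | smul r f hf => rw [mul_smul_comm, map_smul, hf, smul_zero]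
  induction A using MonoidAlgebra.induction_on with
  | of w =>
    show Q (mono w * relGen b p i j * C) = 0
    exact key w C
  | add f g hf hg => rw [add_mul, add_mul, map_add, hf, hg, add_zero]
  | smul r f hf => rw [smul_mul_assoc, smul_mul_assoc, map_smul, hf, smul_zero]

lemma Q_IR (hp : GoodP p) {Q : T N →ₗ[ℂ] T N} (hQ : IsPqsym b p Q)
    {u : T N} (hu : u ∈ IR b p) : Q u = 0 := by
  have hle : IR b p ≤ LinearMap.ker Q := by
    rw [IR, Submodule.span_le]
    rintro x ⟨i, j, A, C, hij, rfl⟩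
    exact Q_rel b p hp hQ hij A C
  exact hle hu

end Aux

/-- under (EA), if `u ∈ T^n` and `P(u) = 0` then `u ∈ I_R`; likewise if
`𝒫_qsym(u) = 0` then `u ∈ I_R`; combined with `𝒫_qsym(I_R) = 0`, the kernel of `𝒫_qsym`
restricted to `T^n` is exactly `I_R ∩ T^n`. -/
theorem statement15 {N : ℕ} (b : Fin N → Fin N → ℂ) (p : Fin N → Fin N → T N)
    (hb : GoodB b) (hp : GoodP p) (hEA : EA b p) :
    (∀ (n : ℕ) (D : DecompChoice n), ValidDecomp D →
      ∀ u ∈ Tdeg N n, POp b p D u = 0 → u ∈ IR b p) ∧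
    (∀ Q : T N →ₗ[ℂ] T N, IsPqsym b p Q →
      ∀ (n : ℕ), ∀ u ∈ Tdeg N n, (Q u = 0 ↔ u ∈ IR b p)) := by
  constructor
  · intro n D hD u hu hPu
    have h := sub_POp_mem b p hb D u
    rwa [hPu, sub_zero] at h
  · intro Q hQ n u hu
    constructor
    · intro hQu
      obtain ⟨D, hD⟩ := exists_validDecomp n
      obtain ⟨N₀, h₀⟩ := hQ n D hD u hu
      have h := sub_POp_pow_mem b p hb D N₀ u
      rwa [h₀ N₀ le_rfl, hQu, sub_zero] at h
    · exact fun hu' => Q_IR b p hp hQ hu'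

end QDiff
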